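/- For nonnegative random variables X and Y with joint distribution function F(u,v), define U(x,y) = ∫₀^x ∫₀^y P(X > u, Y > v) du dv and W(x,y) = ∫₀^x ∫₀^y uv dF(u,v) = E[XY·1{X ≤ x, Y ≤ y}]. Then |W(x,y) − U(x,y)| ≤ 2xy P(X > x) + 2xy P(Y > y) for all x, y > 0. -/

import Mathlib

open MeasureTheory Set
open scoped ENNReal

/-- Auxiliary: the Lebesgue integral of the indicator of `Iio c` over `Ioc 0 t`. -/
lemma aux_min_lintegral {c t : ℝ} (_hc : 0 ≤ c) (_ht : 0 < t) :
    ∫⁻ v in Set.Ioc 0 t, (Set.Iio c).indicator (1 : ℝ → ℝ≥0∞) v = ENNReal.ofReal (min c t) := by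
  rw [lintegral_indicator measurableSet_Iio]
  simp only [Pi.one_apply, MeasureTheory.setLIntegral_one,
    Measure.restrict_apply measurableSet_Iio]
  rcases le_or_gt c t with h | h
  · have : Set.Iio c ∩ Set.Ioc 0 t = Set.Ioo 0 c := by
      ext v
      simp only [Set.mem_inter_iff, Set.mem_Iio, Set.mem_Ioc, Set.mem_Ioo]
      constructor
      · rintro ⟨h1, h2, h3⟩; exact ⟨h2, h1⟩
      · rintro ⟨h1, h2⟩; exact ⟨h2, h1, le_trans h2.le h⟩
    rw [this, Real.volume_Ioo, min_eq_left h, sub_zero]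
  · have : Set.Iio c ∩ Set.Ioc 0 t = Set.Ioc 0 t := by
      apply Set.inter_eq_self_of_subset_right
      intro v hv
      exact lt_of_le_of_lt hv.2 h
    rw [this, Real.volume_Ioc, min_eq_right h.le, sub_zero]

theorem stmt_2 {Ω : Type*} [MeasurableSpace Ω] (P : Measure Ω) [IsProbabilityMeasure P]
    (X Y : Ω → ℝ) (hX : Measurable X) (hY : Measurable Y)
    (hXnn : ∀ ω, 0 ≤ X ω) (hYnn : ∀ ω, 0 ≤ Y ω)
    (x y : ℝ) (hx : 0 < x) (hy : 0 < y) :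
    |(∫ ω in {ω | X ω ≤ x ∧ Y ω ≤ y}, X ω * Y ω ∂P) -
        (∫ u in (0:ℝ)..x, ∫ v in (0:ℝ)..y, (P {ω | u < X ω ∧ v < Y ω}).toReal)| ≤
      2 * x * y * (P {ω | x < X ω}).toReal + 2 * x * y * (P {ω | y < Y ω}).toReal := by
  classical
  -- abbreviation for indicator-like function
  set e : ℝ → ℝ → ℝ≥0∞ := fun a b => if a < b then 1 else 0 with he
  have hsetuv : ∀ u v : ℝ, MeasurableSet {ω | u < X ω ∧ v < Y ω} := fun u v =>
    (measurableSet_lt measurable_const hX).inter (measurableSet_lt measurable_const hY)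
  -- express the probability as a lintegral
  have hP_eq : ∀ u v : ℝ, P {ω | u < X ω ∧ v < Y ω} = ∫⁻ ω, e u (X ω) * e v (Y ω) ∂P := by
    intro u v
    rw [← lintegral_indicator_one (hsetuv u v)]
    refine lintegral_congr fun ω => ?_
    by_cases h1 : u < X ω <;> by_cases h2 : v < Y ω <;>
      simp [he, Set.indicator_apply, h1, h2]
  -- measurability of the two-variable map
  have hS2 : MeasurableSet {q : (ℝ × ℝ) × Ω | q.1.1 < X q.2 ∧ q.1.2 < Y q.2} :=
    (measurableSet_lt (measurable_fst.fst) (hX.comp measurable_snd)).inter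
      (measurableSet_lt (measurable_fst.snd) (hY.comp measurable_snd))
  have hGmeas : Measurable (fun p : ℝ × ℝ => P {ω | p.1 < X ω ∧ p.2 < Y ω}) := by
    have hkey : ∀ p : ℝ × ℝ, P {ω | p.1 < X ω ∧ p.2 < Y ω} =
        ∫⁻ ω, ({q : (ℝ × ℝ) × Ω | q.1.1 < X q.2 ∧ q.1.2 < Y q.2}).indicator 1 (p, ω) ∂P := by
      intro p
      rw [← lintegral_indicator_one (hsetuv p.1 p.2)]
      refine lintegral_congr fun ω => ?_
      simp [Set.indicator_apply]
    simp_rw [hkey]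
    exact Measurable.lintegral_prod_right' (measurable_one.indicator hS2)
  -- inner lintegral computation
  have inner_eq : ∀ u : ℝ, ∫⁻ v in Set.Ioc 0 y, P {ω | u < X ω ∧ v < Y ω} =
      ∫⁻ ω, e u (X ω) * ENNReal.ofReal (min (Y ω) y) ∂P := by
    intro u
    have hmeas : AEMeasurable (Function.uncurry fun (v : ℝ) (ω : Ω) => e u (X ω) * e v (Y ω))
        (((volume : Measure ℝ).restrict (Set.Ioc 0 y)).prod P) := by
      apply Measurable.aemeasurable
      have h1 : Measurable fun p : ℝ × Ω => e u (X p.2) := by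
        apply Measurable.ite (measurableSet_lt measurable_const (hX.comp measurable_snd))
          measurable_const measurable_const
      have h2 : Measurable fun p : ℝ × Ω => e p.1 (Y p.2) := by
        apply Measurable.ite (measurableSet_lt measurable_fst (hY.comp measurable_snd))
          measurable_const measurable_const
      exact h1.mul h2
    calc ∫⁻ v in Set.Ioc 0 y, P {ω | u < X ω ∧ v < Y ω}
        = ∫⁻ v in Set.Ioc 0 y, ∫⁻ ω, e u (X ω) * e v (Y ω) ∂P := by
          simp_rw [hP_eq]
      _ = ∫⁻ ω, (∫⁻ v in Set.Ioc 0 y, e u (X ω) * e v (Y ω)) ∂P :=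
          lintegral_lintegral_swap hmeas
      _ = ∫⁻ ω, e u (X ω) * ENNReal.ofReal (min (Y ω) y) ∂P := by
          refine lintegral_congr fun ω => ?_
          rw [lintegral_const_mul]
          · congr 1
            have hfun : (fun v => e v (Y ω)) = (Set.Iio (Y ω)).indicator 1 := by
              funext v
              simp [he, Set.indicator_apply]
            rw [hfun, aux_min_lintegral (hYnn ω) hy]
          · have : (fun v => e v (Y ω)) = (Set.Iio (Y ω)).indicator 1 := by
              funext v
              simp [he, Set.indicator_apply]
            rw [this]
            exact measurable_one.indicator measurableSet_Iio
  -- full lintegral computation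
  have outer_eq : ∫⁻ u in Set.Ioc 0 x, ∫⁻ v in Set.Ioc 0 y, P {ω | u < X ω ∧ v < Y ω} =
      ∫⁻ ω, ENNReal.ofReal (min (X ω) x * min (Y ω) y) ∂P := by
    simp_rw [inner_eq]
    have hmeas : AEMeasurable (Function.uncurry fun (u : ℝ) (ω : Ω) =>
        e u (X ω) * ENNReal.ofReal (min (Y ω) y))
        (((volume : Measure ℝ).restrict (Set.Ioc 0 x)).prod P) := by
      apply Measurable.aemeasurable
      have h1 : Measurable fun p : ℝ × Ω => e p.1 (X p.2) := by
        apply Measurable.ite (measurableSet_lt measurable_fst (hX.comp measurable_snd))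
          measurable_const measurable_const
      have h2 : Measurable fun p : ℝ × Ω => ENNReal.ofReal (min (Y p.2) y) :=
        (ENNReal.measurable_ofReal.comp ((hY.comp measurable_snd).min measurable_const))
      exact h1.mul h2
    rw [lintegral_lintegral_swap hmeas]
    refine lintegral_congr fun ω => ?_
    rw [lintegral_mul_const]
    · have hfun : (fun u => e u (X ω)) = (Set.Iio (X ω)).indicator 1 := by
        funext u
        simp [he, Set.indicator_apply]
      rw [hfun, aux_min_lintegral (hXnn ω) hx,
        ENNReal.ofReal_mul (le_min (hXnn ω) hx.le)]
    · have : (fun u => e u (X ω)) = (Set.Iio (X ω)).indicator 1 := by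
        funext u
        simp [he, Set.indicator_apply]
      rw [this]
      exact measurable_one.indicator measurableSet_Iio
  -- inner real integral = toReal of inner lintegral
  have inner_real : ∀ u : ℝ, ∫ v in (0:ℝ)..y, (P {ω | u < X ω ∧ v < Y ω}).toReal =
      (∫⁻ v in Set.Ioc 0 y, P {ω | u < X ω ∧ v < Y ω}).toReal := by
    intro u
    rw [intervalIntegral.integral_of_le hy.le, MeasureTheory.integral_toReal]
    · exact (hGmeas.comp (measurable_const.prodMk measurable_id)).aemeasurable
    · exact ae_of_all _ fun v => lt_of_le_of_lt prob_le_one ENNReal.one_lt_top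
  -- measurability of the inner lintegral as a function of u
  have hinner_meas : Measurable fun u => ∫⁻ v in Set.Ioc 0 y, P {ω | u < X ω ∧ v < Y ω} :=
    Measurable.lintegral_prod_right' (f := fun p : ℝ × ℝ => P {ω | p.1 < X ω ∧ p.2 < Y ω}) hGmeas
  have hinner_lt : ∀ u : ℝ, ∫⁻ v in Set.Ioc 0 y, P {ω | u < X ω ∧ v < Y ω} < ⊤ := by
    intro u
    calc ∫⁻ v in Set.Ioc 0 y, P {ω | u < X ω ∧ v < Y ω}
        ≤ ∫⁻ _ in Set.Ioc 0 y, 1 := lintegral_mono fun v => prob_le_one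
      _ = ENNReal.ofReal y := by simp [Real.volume_Ioc]
      _ < ⊤ := ENNReal.ofReal_lt_top
  -- the double integral equals the expectation of the product of truncations
  have key : ∫ u in (0:ℝ)..x, ∫ v in (0:ℝ)..y, (P {ω | u < X ω ∧ v < Y ω}).toReal =
      ∫ ω, min (X ω) x * min (Y ω) y ∂P := by
    have h1 : ∫ u in (0:ℝ)..x, ∫ v in (0:ℝ)..y, (P {ω | u < X ω ∧ v < Y ω}).toReal =
        ∫ u in Set.Ioc 0 x, (∫⁻ v in Set.Ioc 0 y, P {ω | u < X ω ∧ v < Y ω}).toReal := by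
      rw [intervalIntegral.integral_of_le hx.le]
      exact setIntegral_congr_fun measurableSet_Ioc fun u _ => inner_real u
    rw [h1, MeasureTheory.integral_toReal (hinner_meas.aemeasurable)
      (ae_of_all _ fun u => hinner_lt u), outer_eq]
    rw [integral_eq_lintegral_of_nonneg_ae
      (ae_of_all _ fun ω => mul_nonneg (le_min (hXnn ω) hx.le) (le_min (hYnn ω) hy.le))
      (((hX.min measurable_const).mul (hY.min measurable_const)).aestronglyMeasurable)]
  rw [key]
  -- now the purely real part
  set S : Set Ω := {ω | X ω ≤ x ∧ Y ω ≤ y} with hSdef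
  have hS : MeasurableSet S :=
    (measurableSet_le hX measurable_const).inter (measurableSet_le hY measurable_const)
  have hmn_meas : Measurable fun ω => min (X ω) x * min (Y ω) y :=
    (hX.min measurable_const).mul (hY.min measurable_const)
  have hmn_nn : ∀ ω, 0 ≤ min (X ω) x * min (Y ω) y := fun ω =>
    mul_nonneg (le_min (hXnn ω) hx.le) (le_min (hYnn ω) hy.le)
  have hmn_le : ∀ ω, min (X ω) x * min (Y ω) y ≤ x * y := fun ω =>
    mul_le_mul (min_le_right _ _) (min_le_right _ _) (le_min (hYnn ω) hy.le) hx.le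
  have hmn_int : Integrable (fun ω => min (X ω) x * min (Y ω) y) P := by
    refine (integrable_const (x * y)).mono' hmn_meas.aestronglyMeasurable
      (ae_of_all _ fun ω => ?_)
    rw [Real.norm_eq_abs, abs_of_nonneg (hmn_nn ω)]
    exact hmn_le ω
  have hsplit : (∫ ω in S, min (X ω) x * min (Y ω) y ∂P) +
      (∫ ω in Sᶜ, min (X ω) x * min (Y ω) y ∂P) = ∫ ω, min (X ω) x * min (Y ω) y ∂P :=
    integral_add_compl hS hmn_int
  have hS_eq : ∫ ω in S, min (X ω) x * min (Y ω) y ∂P = ∫ ω in S, X ω * Y ω ∂P := by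
    refine setIntegral_congr_fun hS fun ω hω => ?_
    rw [min_eq_left hω.1, min_eq_left hω.2]
  have hcomp_nn : 0 ≤ ∫ ω in Sᶜ, min (X ω) x * min (Y ω) y ∂P :=
    integral_nonneg fun ω => hmn_nn ω
  have habs : |(∫ ω in S, X ω * Y ω ∂P) - ∫ ω, min (X ω) x * min (Y ω) y ∂P| =
      ∫ ω in Sᶜ, min (X ω) x * min (Y ω) y ∂P := by
    rw [← hsplit, hS_eq]
    rw [abs_of_nonpos (by linarith)]
    ring
  rw [habs]
  -- bound the integral over the complement
  have hbound : ∫ ω in Sᶜ, min (X ω) x * min (Y ω) y ∂P ≤ (x * y) * (P Sᶜ).toReal := by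
    calc ∫ ω in Sᶜ, min (X ω) x * min (Y ω) y ∂P
        ≤ ∫ _ in Sᶜ, x * y ∂P :=
          setIntegral_mono_on hmn_int.integrableOn ((integrableOn_const_iff).mpr (Or.inr
            (measure_lt_top _ _))) hS.compl fun ω _ => hmn_le ω
      _ = (P Sᶜ).toReal • (x * y) := setIntegral_const _
      _ = (x * y) * (P Sᶜ).toReal := by rw [smul_eq_mul]; ring
  have hsub : Sᶜ ⊆ {ω | x < X ω} ∪ {ω | y < Y ω} := by
    intro ω hω
    simp only [hSdef, Set.mem_compl_iff, Set.mem_setOf_eq, not_and_or, not_le] at hω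
    rcases hω with h | h
    · exact Or.inl h
    · exact Or.inr h
  have hPc : (P Sᶜ).toReal ≤ (P {ω | x < X ω}).toReal + (P {ω | y < Y ω}).toReal := by
    have h1 : P Sᶜ ≤ P {ω | x < X ω} + P {ω | y < Y ω} :=
      le_trans (measure_mono hsub) (measure_union_le _ _)
    have h2 : (P Sᶜ).toReal ≤ (P {ω | x < X ω} + P {ω | y < Y ω}).toReal :=
      ENNReal.toReal_mono (by finiteness) h1
    rwa [ENNReal.toReal_add (measure_ne_top _ _) (measure_ne_top _ _)] at h2
  have hxy : 0 < x * y := mul_pos hx hy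
  have hA : 0 ≤ (P {ω | x < X ω}).toReal := ENNReal.toReal_nonneg
  have hB : 0 ≤ (P {ω | y < Y ω}).toReal := ENNReal.toReal_nonneg
  nlinarith [hbound, hPc]
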